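/- arXiv:2207.02891 — 5 statements merged into one kernel-verified Lean document; each statement's English description precedes it below -/
import Mathlib

section
/- For every 1 ≤ n ≤ N, the deviation of the augmented point from the original point is controlled by the increments of the original sequence: ‖x_{n,λ} − x_n‖ ≤ Σ_{k=1}^{n} (∏_{i=k}^{n} λ_i) · ‖x_k − x_{k−1}‖. -/
open Finset

/-- Recursively interpolated points. -/
noncomputable def interp {E : Type*} [NormedAddCommGroup E] [NormedSpace ℝ E]
    (x : ℕ → E) (lam : ℕ → ℝ) : ℕ → E
  | 0 => x 0
  | n + 1 => (1 - lam (n + 1)) • x (n + 1) + lam (n + 1) • interp x lam n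

/-- The deviation of the augmented point from the original point is controlled
by the increments of the original sequence:
`‖x_{n,λ} − x_n‖ ≤ Σ_{k=1}^{n} (∏_{i=k}^{n} λ_i) · ‖x_k − x_{k−1}‖`. -/
theorem interp_deviation_le_increments {E : Type*} [NormedAddCommGroup E] [NormedSpace ℝ E]
    (N : ℕ) (x : ℕ → E) (lam : ℕ → ℝ)
    (hlam : ∀ i, 1 ≤ i → i ≤ N → lam i ∈ Set.Ico (0 : ℝ) 1)
    (n : ℕ) (hn1 : 1 ≤ n) (hn : n ≤ N) :
    ‖interp x lam n - x n‖ ≤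
      ∑ k ∈ Finset.Icc 1 n, (∏ i ∈ Finset.Icc k n, lam i) * ‖x k - x (k - 1)‖ := by
  induction n with
  | zero => omega
  | succ n ih =>
    have hlam' := hlam (n+1) (by omega) hn
    have hl0 : 0 ≤ lam (n+1) := hlam'.1
    have key : interp x lam (n+1) - x (n+1)
        = lam (n+1) • (interp x lam n - x n) + lam (n+1) • (x n - x (n+1)) := by
      simp only [interp]
      module
    have hkey : ‖interp x lam (n+1) - x (n+1)‖
        ≤ lam (n+1) * ‖interp x lam n - x n‖ + lam (n+1) * ‖x (n+1) - x n‖ := by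
      rw [key]
      calc _ ≤ ‖lam (n+1) • (interp x lam n - x n)‖ + ‖lam (n+1) • (x n - x (n+1))‖ :=
            norm_add_le _ _
        _ = lam (n+1) * ‖interp x lam n - x n‖ + lam (n+1) * ‖x (n+1) - x n‖ := by
            rw [norm_smul, norm_smul, Real.norm_eq_abs, abs_of_nonneg hl0, norm_sub_rev (x n)]
    rw [← Finset.insert_Icc_right_eq_Icc_add_one (by omega : 1 ≤ n+1), Finset.sum_insert (by simp)]
    have hprod : ∀ k ∈ Finset.Icc 1 n, (∏ i ∈ Finset.Icc k (n+1), lam i) * ‖x k - x (k-1)‖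
        = lam (n+1) * ((∏ i ∈ Finset.Icc k n, lam i) * ‖x k - x (k-1)‖) := by
      intro k hk
      simp only [Finset.mem_Icc] at hk
      rw [← Finset.insert_Icc_right_eq_Icc_add_one (by omega : k ≤ n+1), Finset.prod_insert (by simp [hk.2])]
      ring
    rw [Finset.sum_congr rfl hprod, ← Finset.mul_sum, Finset.Icc_self, Finset.prod_singleton]
    rcases Nat.eq_zero_or_pos n with h0 | hpos
    · subst h0
      refine hkey.trans (le_of_eq ?_)
      simp [interp]
    · have hih := ih (by omega) (by omega)
      calc ‖interp x lam (n+1) - x (n+1)‖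
          ≤ lam (n+1) * ‖interp x lam n - x n‖ + lam (n+1) * ‖x (n+1) - x n‖ := hkey
        _ ≤ lam (n+1) * (∑ k ∈ Finset.Icc 1 n, (∏ i ∈ Finset.Icc k n, lam i) * ‖x k - x (k-1)‖)
              + lam (n+1) * ‖x (n+1) - x n‖ := by
            gcongr
        _ = lam (n+1) * ‖x (n+1) - x (n+1-1)‖ + lam (n+1) * (∑ k ∈ Finset.Icc 1 n, (∏ i ∈ Finset.Icc k n, lam i) * ‖x k - x (k-1)‖) := by
            simp; ring
end

section
/- Suppose λ_1, …, λ_N are independent integrable random variables with values in [0,1) and common mean e = E[λ_i]. Then for every 1 ≤ n ≤ N, the expected deviation satisfies ‖E[x_{n,λ} − x_n]‖ ≤ 3·e·m, where m = max_{0 ≤ i ≤ n} ‖x_i‖. -/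
open Finset MeasureTheory ProbabilityTheory

lemma interp_norm_le {E : Type*} [NormedAddCommGroup E] [NormedSpace ℝ E]
    (x : ℕ → E) (l : ℕ → ℝ) (n : ℕ)
    (hl : ∀ i, 1 ≤ i → i ≤ n → l i ∈ Set.Icc (0 : ℝ) 1) :
    ∀ k, k ≤ n → ‖interp x l k‖ ≤
      (Finset.range (n + 1)).sup' Finset.nonempty_range_add_one fun i => ‖x i‖ := by
  intro k
  induction k with
  | zero =>
    intro _
    exact Finset.le_sup' (fun i => ‖x i‖) (Finset.mem_range.2 (Nat.succ_pos n))
  | succ k ih =>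
    intro hk
    have hkn : k ≤ n := Nat.le_of_succ_le hk
    have hm := ih hkn
    have hli := hl (k + 1) (Nat.succ_le_succ (Nat.zero_le k)) hk
    have h0 : (0 : ℝ) ≤ l (k + 1) := hli.1
    have h1 : l (k + 1) ≤ 1 := hli.2
    have hx : ‖x (k + 1)‖ ≤
        (Finset.range (n + 1)).sup' Finset.nonempty_range_add_one fun i => ‖x i‖ :=
      Finset.le_sup' (fun i => ‖x i‖) (Finset.mem_range.2 (Nat.succ_lt_succ hk))
    calc ‖interp x l (k + 1)‖
        ≤ ‖(1 - l (k + 1)) • x (k + 1)‖ + ‖l (k + 1) • interp x l k‖ :=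
          norm_add_le _ _
      _ = (1 - l (k + 1)) * ‖x (k + 1)‖ + l (k + 1) * ‖interp x l k‖ := by
          rw [norm_smul, norm_smul, Real.norm_eq_abs, Real.norm_eq_abs,
            abs_of_nonneg h0, abs_of_nonneg (by linarith : (0:ℝ) ≤ 1 - l (k + 1))]
      _ ≤ _ := by nlinarith [norm_nonneg (interp x l k), norm_nonneg (x (k+1))]

/-- If the interpolation coefficients are independent, integrable, `[0,1)`-valued
random variables with common mean `e`, then the expected deviation satisfies
`‖E[x_{n,λ} − x_n]‖ ≤ 3·e·m` with `m = max_{0 ≤ i ≤ n} ‖x i‖`. -/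
theorem interp_expected_deviation_le
    {E : Type*} [NormedAddCommGroup E] [NormedSpace ℝ E] [FiniteDimensional ℝ E]
    [MeasurableSpace E] [BorelSpace E]
    {Ω : Type*} [MeasureSpace Ω] [IsProbabilityMeasure (ℙ : Measure Ω)]
    (N : ℕ) (x : ℕ → E) (lam : ℕ → Ω → ℝ)
    (hmeas : ∀ i, Measurable (lam i))
    (hint : ∀ i, Integrable (lam i))
    (hval : ∀ i ω, 1 ≤ i → i ≤ N → lam i ω ∈ Set.Ico (0 : ℝ) 1)
    (hindep : iIndepFun lam ℙ)
    (e : ℝ) (hmean : ∀ i, 1 ≤ i → i ≤ N → (∫ ω, lam i ω) = e)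
    (n : ℕ) (hn1 : 1 ≤ n) (hn : n ≤ N) :
    ‖∫ ω, (interp x (fun i => lam i ω) n - x n)‖ ≤
      3 * e * ((Finset.range (n + 1)).sup' Finset.nonempty_range_add_one fun i => ‖x i‖) := by
  obtain ⟨k, rfl⟩ : ∃ k, n = k + 1 := ⟨n - 1, (Nat.succ_pred_eq_of_pos hn1).symm⟩
  set m : ℝ := (Finset.range (k + 1 + 1)).sup' Finset.nonempty_range_add_one fun i => ‖x i‖
    with hm_def
  have hm0 : 0 ≤ m :=
    le_trans (norm_nonneg (x 0))
      (Finset.le_sup' (fun i => ‖x i‖) (Finset.mem_range.2 (Nat.succ_pos _)))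
  have he0 : 0 ≤ e := by
    rw [← hmean (k + 1) (Nat.succ_le_succ (Nat.zero_le k)) hn]
    exact integral_nonneg fun ω => (hval (k + 1) ω (Nat.succ_le_succ (Nat.zero_le k)) hn).1
  have hicc : ∀ ω i, 1 ≤ i → i ≤ k + 1 → lam i ω ∈ Set.Icc (0 : ℝ) 1 := fun ω i h1 h2 =>
    ⟨(hval i ω h1 (le_trans h2 hn)).1, le_of_lt (hval i ω h1 (le_trans h2 hn)).2⟩
  have hpt : ∀ ω, interp x (fun i => lam i ω) (k + 1) - x (k + 1) =
      lam (k + 1) ω • (interp x (fun i => lam i ω) k - x (k + 1)) := by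
    intro ω
    show (1 - lam (k + 1) ω) • x (k + 1) + lam (k + 1) ω • interp x (fun i => lam i ω) k
        - x (k + 1) = _
    rw [sub_smul, one_smul, smul_sub]
    abel
  have hbound : ∀ ω, ‖interp x (fun i => lam i ω) (k + 1) - x (k + 1)‖ ≤
      lam (k + 1) ω * (2 * m) := by
    intro ω
    have h0 : (0 : ℝ) ≤ lam (k + 1) ω :=
      (hval (k + 1) ω (Nat.succ_le_succ (Nat.zero_le k)) hn).1
    have hik : ‖interp x (fun i => lam i ω) k‖ ≤ m :=
      interp_norm_le x (fun i => lam i ω) (k + 1) (fun i h1 h2 => hicc ω i h1 h2) k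
        (Nat.le_succ k)
    have hx : ‖x (k + 1)‖ ≤ m :=
      Finset.le_sup' (fun i => ‖x i‖) (Finset.mem_range.2 (Nat.lt_succ_self _))
    rw [hpt ω, norm_smul, Real.norm_eq_abs, abs_of_nonneg h0]
    have : ‖interp x (fun i => lam i ω) k - x (k + 1)‖ ≤ 2 * m := by
      calc ‖interp x (fun i => lam i ω) k - x (k + 1)‖
          ≤ ‖interp x (fun i => lam i ω) k‖ + ‖x (k + 1)‖ := norm_sub_le _ _
        _ ≤ 2 * m := by linarith
    nlinarith
  calc ‖∫ ω, (interp x (fun i => lam i ω) (k + 1) - x (k + 1))‖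
      ≤ ∫ ω, ‖interp x (fun i => lam i ω) (k + 1) - x (k + 1)‖ :=
        norm_integral_le_integral_norm _
    _ ≤ ∫ ω, lam (k + 1) ω * (2 * m) := by
        refine integral_mono_of_nonneg (Filter.Eventually.of_forall fun ω => norm_nonneg _)
          ((hint (k + 1)).mul_const _) (Filter.Eventually.of_forall hbound)
    _ = e * (2 * m) := by
        rw [integral_mul_const, hmean (k + 1) (Nat.succ_le_succ (Nat.zero_le k)) hn]
    _ ≤ 3 * e * m := by nlinarith
end

section
/- Suppose λ_1, …, λ_N are independent integrable random variables with values in [0,1) and common mean e = E[λ_i], with e < 1. Then for every 1 ≤ n ≤ N, the expected deviation satisfies ‖E[x_{n,λ} − x_n]‖ ≤ min{ (e/(1−e))·m′, n·e·m′ }, where m′ = max_{1 ≤ i ≤ n} ‖x_i − x_{i−1}‖. -/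
open Finset MeasureTheory ProbabilityTheory

lemma aux_prod {Ω : Type*} [MeasureSpace Ω] [IsProbabilityMeasure (ℙ : Measure Ω)]
    (f : ℕ → Ω → ℝ) (hmeas : ∀ i, Measurable (f i)) (hint : ∀ i, Integrable (f i))
    (hindep : iIndepFun f ℙ)
    (s : Finset ℕ) :
    Integrable (fun ω => ∏ i ∈ s, f i ω) ∧
      (∫ ω, ∏ i ∈ s, f i ω) = ∏ i ∈ s, ∫ ω, f i ω := by
  classical
  induction s using Finset.induction_on with
  | empty => simp
  | insert _ _ hi ih =>
    rename_i a s
    have hip : IndepFun (∏ j ∈ s, f j) (f a) ℙ :=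
      hindep.indepFun_finset_prod_of_notMem hmeas hi
    have hps : (fun ω => ∏ i ∈ s, f i ω) = ∏ j ∈ s, f j := by
      ext ω; simp
    have hintp : Integrable (∏ j ∈ s, f j) := hps ▸ ih.1
    have hmul : Integrable ((∏ j ∈ s, f j) * f a) := hip.integrable_mul hintp (hint a)
    constructor
    · have : (fun ω => ∏ i ∈ insert a s, f i ω) = (∏ j ∈ s, f j) * f a := by
        ext ω; simp [Finset.prod_insert hi, mul_comm]
      rw [this]; exact hmul
    · have h1 : (fun ω => ∏ i ∈ insert a s, f i ω) = fun ω => (∏ j ∈ s, f j) ω * f a ω := by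
        ext ω; simp [Finset.prod_insert hi, mul_comm]
      rw [h1]
      have h2 : ∫ ω, (∏ j ∈ s, f j) ω * f a ω
          = (∫ ω, (∏ j ∈ s, f j) ω) * ∫ ω, f a ω :=
        hip.integral_mul_eq_mul_integral hintp.aestronglyMeasurable (hint a).aestronglyMeasurable
      rw [h2, Finset.prod_insert hi, mul_comm]
      congr 1
      · have h3 : (fun ω => (∏ j ∈ s, f j) ω) = fun ω => ∏ i ∈ s, f i ω := by
          ext ω; simp
        rw [h3, ih.2]

lemma interp_sub_eq {E : Type*} [NormedAddCommGroup E] [NormedSpace ℝ E]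
    (x : ℕ → E) (lam : ℕ → ℝ) (n : ℕ) :
    interp x lam n - x n
      = ∑ k ∈ Finset.Icc 1 n, (∏ i ∈ Finset.Icc k n, lam i) • (x (k - 1) - x k) := by
  induction n with
  | zero => simp [interp]
  | succ n ih =>
    have hA : interp x lam (n + 1) - x (n + 1)
        = lam (n + 1) • ((interp x lam n - x n) + (x n - x (n + 1))) := by
      show (1 - lam (n + 1)) • x (n + 1) + lam (n + 1) • interp x lam n - x (n + 1) = _
      module
    rw [hA, ih, Finset.sum_Icc_succ_top (by omega : 1 ≤ n + 1), smul_add, Finset.smul_sum]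
    congr 1
    · refine Finset.sum_congr rfl fun k hk => ?_
      rw [Finset.prod_Icc_succ_top (by simp only [Finset.mem_Icc] at hk; omega : k ≤ n + 1),
        mul_comm, mul_smul]
    · rw [Finset.Icc_self, Finset.prod_singleton]
      simp

/-- If the interpolation coefficients are independent, integrable, `[0,1)`-valued
random variables with common mean `e < 1`, then the expected deviation satisfies
`‖E[x_{n,λ} − x_n]‖ ≤ min{ (e/(1−e))·m′, n·e·m′ }` with
`m′ = max_{1 ≤ i ≤ n} ‖x i − x (i−1)‖`. -/
theorem interp_expected_deviation_le_increments
    {E : Type*} [NormedAddCommGroup E] [NormedSpace ℝ E] [FiniteDimensional ℝ E]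
    [MeasurableSpace E] [BorelSpace E]
    {Ω : Type*} [MeasureSpace Ω] [IsProbabilityMeasure (ℙ : Measure Ω)]
    (N : ℕ) (x : ℕ → E) (lam : ℕ → Ω → ℝ)
    (hmeas : ∀ i, Measurable (lam i))
    (hint : ∀ i, Integrable (lam i))
    (hval : ∀ i ω, 1 ≤ i → i ≤ N → lam i ω ∈ Set.Ico (0 : ℝ) 1)
    (hindep : iIndepFun lam ℙ)
    (e : ℝ) (he : e < 1) (hmean : ∀ i, 1 ≤ i → i ≤ N → (∫ ω, lam i ω) = e)
    (n : ℕ) (hn1 : 1 ≤ n) (hn : n ≤ N) :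
    ‖∫ ω, (interp x (fun i => lam i ω) n - x n)‖ ≤
      min ((e / (1 - e)) *
            ((Finset.Icc 1 n).sup' (Finset.nonempty_Icc.mpr hn1) fun i => ‖x i - x (i - 1)‖))
          ((n : ℝ) * e *
            ((Finset.Icc 1 n).sup' (Finset.nonempty_Icc.mpr hn1) fun i => ‖x i - x (i - 1)‖)) := by
  have h1N : 1 ≤ N := hn1.trans hn
  have he0 : 0 ≤ e := by
    rw [← hmean 1 le_rfl h1N]
    exact integral_nonneg fun ω => (hval 1 ω le_rfl h1N).1
  have h1e : 0 < 1 - e := by linarith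
  have hprod := aux_prod lam hmeas hint hindep
  set m := (Finset.Icc 1 n).sup' (Finset.nonempty_Icc.mpr hn1) fun i => ‖x i - x (i - 1)‖ with hm
  have hm0 : 0 ≤ m := by
    refine le_trans (norm_nonneg (x n - x (n - 1))) ?_
    exact Finset.le_sup' (fun i => ‖x i - x (i - 1)‖) (Finset.mem_Icc.mpr ⟨hn1, le_rfl⟩)
  have hInt : (∫ ω, (interp x (fun i => lam i ω) n - x n))
      = ∑ k ∈ Finset.Icc 1 n, (e ^ (n + 1 - k)) • (x (k - 1) - x k) := by
    have heq : ∀ ω : Ω, interp x (fun i => lam i ω) n - x n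
        = ∑ k ∈ Finset.Icc 1 n, (∏ i ∈ Finset.Icc k n, lam i ω) • (x (k - 1) - x k) :=
      fun ω => interp_sub_eq x (fun i => lam i ω) n
    simp_rw [heq]
    rw [integral_finset_sum _ (fun k _ => ((hprod (Finset.Icc k n)).1).smul_const _)]
    refine Finset.sum_congr rfl fun k hk => ?_
    rw [integral_smul_const, (hprod (Finset.Icc k n)).2]
    congr 1
    rw [Finset.prod_congr rfl (fun i hi => hmean i
        (by simp only [Finset.mem_Icc] at hk hi; omega)
        (by simp only [Finset.mem_Icc] at hk hi; omega)),
      Finset.prod_const, Nat.card_Icc]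
  have hbound : ‖∑ k ∈ Finset.Icc 1 n, (e ^ (n + 1 - k)) • (x (k - 1) - x k)‖
      ≤ (∑ k ∈ Finset.Icc 1 n, e ^ (n + 1 - k)) * m := by
    calc ‖∑ k ∈ Finset.Icc 1 n, (e ^ (n + 1 - k)) • (x (k - 1) - x k)‖
        ≤ ∑ k ∈ Finset.Icc 1 n, ‖(e ^ (n + 1 - k)) • (x (k - 1) - x k)‖ :=
          norm_sum_le _ _
      _ ≤ ∑ k ∈ Finset.Icc 1 n, e ^ (n + 1 - k) * m := by
          refine Finset.sum_le_sum fun k hk => ?_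
          rw [norm_smul, Real.norm_eq_abs, abs_of_nonneg (pow_nonneg he0 _)]
          refine mul_le_mul_of_nonneg_left ?_ (pow_nonneg he0 _)
          rw [norm_sub_rev]
          exact Finset.le_sup' (fun i => ‖x i - x (i - 1)‖) hk
      _ = (∑ k ∈ Finset.Icc 1 n, e ^ (n + 1 - k)) * m := by rw [Finset.sum_mul]
  have hS : ∑ k ∈ Finset.Icc 1 n, e ^ (n + 1 - k) = ∑ j ∈ Finset.range n, e ^ (j + 1) := by
    refine Finset.sum_nbij' (fun k => n - k) (fun j => n - j) ?_ ?_ ?_ ?_ ?_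
    · intro a ha; simp only [Finset.mem_Icc] at ha; simp only [Finset.mem_range]; omega
    · intro a ha; simp only [Finset.mem_range] at ha; simp only [Finset.mem_Icc]; omega
    · intro a ha; simp only [Finset.mem_Icc] at ha; omega
    · intro a ha; simp only [Finset.mem_range] at ha; omega
    · intro a ha; simp only [Finset.mem_Icc] at ha; congr 1; omega
  have hgeom : ∑ j ∈ Finset.range n, e ^ j ≤ 1 / (1 - e) := by
    rw [le_div_iff₀ h1e]
    nlinarith [geom_sum_mul e n, pow_nonneg he0 n]
  have hS1 : ∑ j ∈ Finset.range n, e ^ (j + 1) ≤ e / (1 - e) := by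
    have : ∑ j ∈ Finset.range n, e ^ (j + 1) = e * ∑ j ∈ Finset.range n, e ^ j := by
      rw [Finset.mul_sum]
      exact Finset.sum_congr rfl fun j _ => by ring
    rw [this, div_eq_mul_one_div]
    exact mul_le_mul_of_nonneg_left hgeom he0
  have hS2 : ∑ j ∈ Finset.range n, e ^ (j + 1) ≤ (n : ℝ) * e := by
    have h1 : ∀ j ∈ Finset.range n, e ^ (j + 1) ≤ e := fun j _ => by
      calc e ^ (j + 1) = e ^ j * e := by ring
        _ ≤ 1 * e := mul_le_mul_of_nonneg_right (pow_le_one₀ he0 he.le) he0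
        _ = e := one_mul e
    calc ∑ j ∈ Finset.range n, e ^ (j + 1) ≤ ∑ _j ∈ Finset.range n, e :=
          Finset.sum_le_sum h1
      _ = (n : ℝ) * e := by simp [Finset.sum_const, nsmul_eq_mul]
  rw [hInt]
  refine le_min ?_ ?_
  · refine hbound.trans (mul_le_mul_of_nonneg_right ?_ hm0)
    rw [hS]; exact hS1
  · refine hbound.trans (mul_le_mul_of_nonneg_right ?_ hm0)
    rw [hS]; exact hS2
end

section
/- Assume l takes values in [0,1], Θ is nonempty, and l is L-Lipschitz in its first argument uniformly in θ: |l(s,θ) − l(s′,θ)| ≤ L·‖s − s′‖ for all s, s′, θ. Fix samples s_0, …, s_N ∈ S and define the empirical Rademacher complexity of a family f : S × Θ → ℝ as ℛ_N(f) := E_ε[ sup_{θ∈Θ} | (1/(N+1)) Σ_{i=0}^{N} ε_i · f(s_i, θ) | ], where ε = (ε_0,…,ε_N) is uniformly distributed on {−1, +1}^{N+1}. Then the Rademacher complexity of the averaged augmented loss l_aug(s,θ) := ∫_Λ l(a(s,μ),θ) d𝒟(μ) satisfies ℛ_N(l_aug) ≤ ℛ_N(l) + max_{0 ≤ i ≤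 N} L · ∫_Λ ‖a(s_i,μ) − s_i‖ d𝒟(μ). -/
open MeasureTheory Finset

/-- The empirical Rademacher complexity of the averaged augmented loss is bounded by
that of the original loss plus the maximal expected augmentation distance (times the
Lipschitz constant `L`). -/
theorem rademacher_aug_le
    {S : Type*} [NormedAddCommGroup S]
    {Λ : Type*} [MeasurableSpace Λ]
    (D : Measure Λ) [IsProbabilityMeasure D]
    {Θ : Type*} [Nonempty Θ]
    (a : S → Λ → S)
    (l : S → Θ → ℝ)
    (hl01 : ∀ s θ, l s θ ∈ Set.Icc (0 : ℝ) 1)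
    (L : ℝ)
    (hLip : ∀ s s' θ, |l s θ - l s' θ| ≤ L * ‖s - s'‖)
    (N : ℕ) (s : Fin (N + 1) → S)
    (hint1 : ∀ s' θ, Integrable (fun μ => l (a s' μ) θ) D)
    (hint2 : ∀ s', Integrable (fun μ => ‖a s' μ - s'‖) D)
    -- the averaged augmented loss
    (laug : S → Θ → ℝ) (hlaug : ∀ s' θ, laug s' θ = ∫ μ, l (a s' μ) θ ∂D)
    -- the empirical Rademacher complexity, the expectation being the average over
    -- all sign vectors ε ∈ {−1,+1}^{N+1}
    (Rad : (S → Θ → ℝ) → ℝ)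
    (hRad : ∀ f : S → Θ → ℝ, Rad f =
      (∑ ε : Fin (N + 1) → Bool,
        ⨆ θ : Θ, |(1 / (N + 1 : ℝ)) * ∑ i, (if ε i then (1 : ℝ) else -1) * f (s i) θ|)
        / 2 ^ (N + 1)) :
    Rad laug ≤ Rad l +
      Finset.univ.sup' Finset.univ_nonempty
        (fun i => L * ∫ μ, ‖a (s i) μ - s i‖ ∂D) := by
  set M := Finset.univ.sup' Finset.univ_nonempty
      (fun i => L * ∫ μ, ‖a (s i) μ - s i‖ ∂D) with hMdef
  have hc : (0:ℝ) < (N:ℝ) + 1 := by positivity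
  -- pointwise bound on laug - l
  have hdiff : ∀ (i : Fin (N+1)) (θ : Θ), |laug (s i) θ - l (s i) θ| ≤ M := by
    intro i θ
    have h1 : |laug (s i) θ - l (s i) θ| ≤ L * ∫ μ, ‖a (s i) μ - s i‖ ∂D := by
      rw [hlaug]
      have heq : (∫ μ, l (a (s i) μ) θ ∂D) - l (s i) θ
          = ∫ μ, (l (a (s i) μ) θ - l (s i) θ) ∂D := by
        rw [integral_sub (hint1 _ _) (integrable_const _)]
        simp
      rw [heq]
      calc |∫ μ, (l (a (s i) μ) θ - l (s i) θ) ∂D|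
          ≤ ∫ μ, |l (a (s i) μ) θ - l (s i) θ| ∂D := by
            simpa using norm_integral_le_integral_norm
              (fun μ => l (a (s i) μ) θ - l (s i) θ) (μ := D)
        _ ≤ ∫ μ, L * ‖a (s i) μ - s i‖ ∂D := by
            refine integral_mono ((hint1 _ _).sub (integrable_const _)).abs
              ((hint2 _).const_mul L) ?_
            intro μ; exact hLip _ _ _
        _ = L * ∫ μ, ‖a (s i) μ - s i‖ ∂D := integral_const_mul L _
    refine h1.trans ?_
    rw [hMdef]
    exact Finset.le_sup' (fun i => L * ∫ μ, ‖a (s i) μ - s i‖ ∂D) (Finset.mem_univ i)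
  have hM0 : 0 ≤ M := le_trans (abs_nonneg _) (hdiff 0 (Classical.arbitrary Θ))
  -- bound per sign vector
  have key : ∀ ε : Fin (N+1) → Bool,
      (⨆ θ : Θ, |(1 / (N + 1 : ℝ)) * ∑ i, (if ε i then (1:ℝ) else -1) * laug (s i) θ|)
      ≤ (⨆ θ : Θ, |(1 / (N + 1 : ℝ)) * ∑ i, (if ε i then (1:ℝ) else -1) * l (s i) θ|)
        + M := by
    intro ε
    have hbdd : BddAbove (Set.range fun θ : Θ =>
        |(1 / (N + 1 : ℝ)) * ∑ i, (if ε i then (1:ℝ) else -1) * l (s i) θ|) := by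
      refine ⟨1, ?_⟩
      rintro x ⟨θ, rfl⟩
      have hsum : |∑ i, (if ε i then (1:ℝ) else -1) * l (s i) θ| ≤ (N:ℝ) + 1 := by
        calc |∑ i, (if ε i then (1:ℝ) else -1) * l (s i) θ|
            ≤ ∑ i, |(if ε i then (1:ℝ) else -1) * l (s i) θ| :=
              Finset.abs_sum_le_sum_abs _ _
          _ ≤ ∑ _i : Fin (N+1), (1:ℝ) := by
              refine Finset.sum_le_sum fun i _ => ?_
              rw [abs_mul]
              have h1 : |(if ε i then (1:ℝ) else -1)| = 1 := by
                by_cases h : ε i <;> simp [h]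
              rw [h1, one_mul]
              rcases hl01 (s i) θ with ⟨h0, h2⟩
              rw [abs_of_nonneg h0]; exact h2
          _ = (N:ℝ) + 1 := by simp
      dsimp only
      rw [abs_mul, abs_of_nonneg (by positivity : (0:ℝ) ≤ 1 / (N+1 : ℝ))]
      rw [div_mul_eq_mul_div, one_mul, div_le_one hc]
      exact hsum
    refine ciSup_le fun θ => ?_
    have hpt : |(1 / (N + 1 : ℝ)) * ∑ i, (if ε i then (1:ℝ) else -1) * laug (s i) θ|
        ≤ |(1 / (N + 1 : ℝ)) * ∑ i, (if ε i then (1:ℝ) else -1) * l (s i) θ| + M := by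
      have hd : |(1 / (N + 1 : ℝ)) * ∑ i, (if ε i then (1:ℝ) else -1) * laug (s i) θ
          - (1 / (N + 1 : ℝ)) * ∑ i, (if ε i then (1:ℝ) else -1) * l (s i) θ| ≤ M := by
        have heq : (1 / (N + 1 : ℝ)) * ∑ i, (if ε i then (1:ℝ) else -1) * laug (s i) θ
            - (1 / (N + 1 : ℝ)) * ∑ i, (if ε i then (1:ℝ) else -1) * l (s i) θ
            = (1 / (N + 1 : ℝ)) * ∑ i, (if ε i then (1:ℝ) else -1)
                * (laug (s i) θ - l (s i) θ) := by
          rw [← mul_sub, ← Finset.sum_sub_distrib]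
          congr 1
          refine Finset.sum_congr rfl fun i _ => by ring
        rw [heq, abs_mul, abs_of_nonneg (by positivity : (0:ℝ) ≤ 1 / (N+1 : ℝ))]
        have hsum : |∑ i, (if ε i then (1:ℝ) else -1) * (laug (s i) θ - l (s i) θ)|
            ≤ ((N:ℝ) + 1) * M := by
          calc |∑ i, (if ε i then (1:ℝ) else -1) * (laug (s i) θ - l (s i) θ)|
              ≤ ∑ i, |(if ε i then (1:ℝ) else -1) * (laug (s i) θ - l (s i) θ)| :=
                Finset.abs_sum_le_sum_abs _ _
            _ ≤ ∑ _i : Fin (N+1), M := by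
                refine Finset.sum_le_sum fun i _ => ?_
                rw [abs_mul]
                have h1 : |(if ε i then (1:ℝ) else -1)| = 1 := by
                  by_cases h : ε i <;> simp [h]
                rw [h1, one_mul]
                exact hdiff i θ
            _ = ((N:ℝ) + 1) * M := by
                rw [Finset.sum_const, Finset.card_univ, Fintype.card_fin]
                push_cast; ring
        calc (1 / (N + 1 : ℝ))
              * |∑ i, (if ε i then (1:ℝ) else -1) * (laug (s i) θ - l (s i) θ)|
            ≤ (1 / (N + 1 : ℝ)) * (((N:ℝ) + 1) * M) := by
              exact mul_le_mul_of_nonneg_left hsum (by positivity)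
          _ = M := by field_simp
      calc |(1 / (N + 1 : ℝ)) * ∑ i, (if ε i then (1:ℝ) else -1) * laug (s i) θ|
          ≤ |(1 / (N + 1 : ℝ)) * ∑ i, (if ε i then (1:ℝ) else -1) * l (s i) θ|
            + |(1 / (N + 1 : ℝ)) * ∑ i, (if ε i then (1:ℝ) else -1) * laug (s i) θ
              - (1 / (N + 1 : ℝ)) * ∑ i, (if ε i then (1:ℝ) else -1) * l (s i) θ| := by
            have := abs_sub_abs_le_abs_sub
              ((1 / (N + 1 : ℝ)) * ∑ i, (if ε i then (1:ℝ) else -1) * laug (s i) θ)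
              ((1 / (N + 1 : ℝ)) * ∑ i, (if ε i then (1:ℝ) else -1) * l (s i) θ)
            linarith
        _ ≤ _ := add_le_add_right hd _
    exact hpt.trans (add_le_add_left (le_ciSup hbdd θ) M)
  -- conclude
  rw [hRad, hRad]
  have hcard : (Finset.univ : Finset (Fin (N+1) → Bool)).card = 2 ^ (N+1) := by
    simp [Finset.card_univ]
  calc (∑ ε : Fin (N+1) → Bool,
        ⨆ θ : Θ, |(1 / (N + 1 : ℝ)) * ∑ i, (if ε i then (1:ℝ) else -1) * laug (s i) θ|)
        / 2 ^ (N + 1)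
      ≤ (∑ ε : Fin (N+1) → Bool,
          ((⨆ θ : Θ, |(1 / (N + 1 : ℝ)) * ∑ i, (if ε i then (1:ℝ) else -1) * l (s i) θ|)
            + M)) / 2 ^ (N + 1) := by
        gcongr with ε _
        exact key ε
    _ = (∑ ε : Fin (N+1) → Bool,
          ⨆ θ : Θ, |(1 / (N + 1 : ℝ)) * ∑ i, (if ε i then (1:ℝ) else -1) * l (s i) θ|)
          / 2 ^ (N + 1) + M := by
        rw [Finset.sum_add_distrib, Finset.sum_const, hcard, add_div, nsmul_eq_mul]
        congr 1
        field_simp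
        push_cast; ring
end

section
/- Fix λ ∈ [0,1)^d, indices 1 ≤ j ≤ d and 0 ≤ i ≤ d, and consider the map t ↦ x_{i, λ[j:=t]} obtained by replacing the j-th interpolation coefficient by t. This map is differentiable at t = λ_j, and its derivative equals: 0 if i < j; x_{j−1,λ} − x_j if i = j; and (∏_{k=j+1}^{i} λ_k)·(x_{j−1,λ} − x_j) if i > j. -/
open Finset

lemma interp_update_eq {E : Type*} [NormedAddCommGroup E] [NormedSpace ℝ E]
    (x : ℕ → E) (lam : ℕ → ℝ) (j : ℕ) (t : ℝ) (n : ℕ) (hn : n < j) :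
    interp x (Function.update lam j t) n = interp x lam n := by
  induction n with
  | zero => rfl
  | succ m ih =>
    simp only [interp, Function.update_of_ne (by omega : m + 1 ≠ j), ih (by omega)]

/-- Structure of the partial derivative of the recursively interpolated point with
respect to the `j`-th interpolation coefficient: the map `t ↦ x_{i, λ[j:=t]}` is
differentiable at `t = λ_j` with derivative `0` if `i < j`, `x_{j−1,λ} − x_j` if
`i = j`, and `(∏_{k=j+1}^{i} λ_k)·(x_{j−1,λ} − x_j)` if `i > j`. -/
theorem interp_hasDerivAt_update {E : Type*} [NormedAddCommGroup E] [NormedSpace ℝ E]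
    (d : ℕ) (x : ℕ → E) (lam : ℕ → ℝ)
    (hlam : ∀ i, 1 ≤ i → i ≤ d → lam i ∈ Set.Ico (0 : ℝ) 1)
    (j : ℕ) (hj1 : 1 ≤ j) (hjd : j ≤ d)
    (i : ℕ) (hid : i ≤ d) :
    HasDerivAt (fun t => interp x (Function.update lam j t) i)
      (if i < j then 0
       else if i = j then interp x lam (j - 1) - x j
       else (∏ k ∈ Finset.Icc (j + 1) i, lam k) • (interp x lam (j - 1) - x j))
      (lam j) := by
  induction i with
  | zero =>
    rw [if_pos (by omega : 0 < j)]
    exact hasDerivAt_const _ _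
  | succ n ih =>
    by_cases h1 : n + 1 < j
    · rw [if_pos h1]
      have heq : (fun t => interp x (Function.update lam j t) (n + 1)) =
          fun _ => interp x lam (n + 1) :=
        funext fun t => interp_update_eq x lam j t _ h1
      rw [heq]
      exact hasDerivAt_const _ _
    · by_cases h2 : n + 1 = j
      · rw [if_neg h1, if_pos h2]
        subst h2
        have heq : (fun t => interp x (Function.update lam (n + 1) t) (n + 1)) =
            fun t => (1 - t) • x (n + 1) + t • interp x lam n := by
          funext t
          simp only [interp, Function.update_self,
            interp_update_eq x lam (n + 1) t n (by omega)]
        rw [heq]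
        have hA : HasDerivAt (fun t : ℝ => (1 - t) • x (n + 1))
            ((-1 : ℝ) • x (n + 1)) (lam (n + 1)) :=
          (((hasDerivAt_id (lam (n + 1)))).const_sub 1).smul_const _
        have hB : HasDerivAt (fun t : ℝ => t • interp x lam n)
            ((1 : ℝ) • interp x lam n) (lam (n + 1)) :=
          (hasDerivAt_id (lam (n + 1))).smul_const _
        have := hA.add hB
        convert this using 1
        · rfl
        simp only [Nat.add_sub_cancel, neg_smul, one_smul]
        abel
      · rw [if_neg h1, if_neg h2]
        have hn : j ≤ n := by omega
        have ihn := ih (by omega)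
        have heq : (fun t => interp x (Function.update lam j t) (n + 1)) =
            fun t => (1 - lam (n + 1)) • x (n + 1) +
              lam (n + 1) • interp x (Function.update lam j t) n := by
          funext t
          simp only [interp, Function.update_of_ne (by omega : n + 1 ≠ j)]
        rw [heq]
        have hD := (ihn.const_smul (lam (n + 1))).const_add ((1 - lam (n + 1)) • x (n + 1))
        convert hD using 1
        · rfl
        by_cases h3 : n = j
        · subst h3
          rw [if_neg (by omega), if_pos rfl]
          rw [Finset.Icc_self, Finset.prod_singleton]
        · rw [if_neg (by omega), if_neg h3]
          rw [Finset.prod_Icc_succ_top (by omega : j + 1 ≤ n + 1), smul_smul, mul_comm]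
end
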